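/- Let A1 and A2 be the symmetrized barotropic Euler Jacobians with reference state v̄ = (v̄1, v̄2) ≠ 0 and sound speed ā > 0. If real numbers m̄1, m̄2 satisfy −1 + m̄1·v̄1 + m̄2·v̄2 = σ(|m̄1| + |m̄2|)·ā for some σ > 1, then the matrix A(m̄) = −Id + m̄1·A1 + m̄2·A2 is positive definite. -/

import Mathlib

open Matrix

theorem euler_LMI_posdef
    (a v1 v2 m1 m2 σ : ℝ) (ha : 0 < a) (hv : (v1, v2) ≠ (0, 0)) (hσ : 1 < σ)
    (A1 A2 : Matrix (Fin 3) (Fin 3) ℝ)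
    (hA1 : A1 = !![v1, a, 0; a, v1, 0; 0, 0, v1])
    (hA2 : A2 = !![v2, 0, a; 0, v2, 0; a, 0, v2])
    (hm : -1 + m1 * v1 + m2 * v2 = σ * (|m1| + |m2|) * a) :
    (-(1 : Matrix (Fin 3) (Fin 3) ℝ) + m1 • A1 + m2 • A2).PosDef := by
  subst hA1 hA2
  have hnz : 0 < |m1| + |m2| := by
    rcases lt_or_eq_of_le (by positivity : (0:ℝ) ≤ |m1| + |m2|) with h | h
    · exact h
    · exfalso
      have h1 : m1 = 0 := abs_eq_zero.mp (by nlinarith [abs_nonneg m1, abs_nonneg m2])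
      have h2 : m2 = 0 := abs_eq_zero.mp (by nlinarith [abs_nonneg m1, abs_nonneg m2])
      rw [h1, h2] at hm; simp at hm
  rw [Matrix.posDef_iff_dotProduct_mulVec]
  constructor
  · ext i j
    fin_cases i <;> fin_cases j <;>
      simp [Matrix.conjTranspose_apply, Matrix.one_apply, mul_comm]
  · intro x hx
    have hQ : star x ⬝ᵥ ((-(1 : Matrix (Fin 3) (Fin 3) ℝ) + m1 • !![v1, a, 0; a, v1, 0; 0, 0, v1] + m2 • !![v2, 0, a; 0, v2, 0; a, 0, v2]).mulVec x)
        = (-1 + m1 * v1 + m2 * v2) * (x 0 ^ 2 + x 1 ^ 2 + x 2 ^ 2)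
          + 2 * m1 * a * (x 0 * x 1) + 2 * m2 * a * (x 0 * x 2) := by
      simp [dotProduct, Matrix.mulVec, Fin.sum_univ_three, Matrix.one_apply]
      ring
    rw [hQ, hm]
    have hxs : 0 < x 0 ^ 2 + x 1 ^ 2 + x 2 ^ 2 := by
      rcases (Function.ne_iff.mp hx) with ⟨i, hi⟩
      fin_cases i <;> simp at hi <;> positivity
    have h1 : 0 ≤ |m1| * x 0 ^ 2 + |m1| * x 1 ^ 2 + 2 * m1 * (x 0 * x 1) := by
      rcases abs_cases m1 with ⟨h, _⟩ | ⟨h, _⟩ <;> rw [h] <;>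
        nlinarith [sq_nonneg (x 0 + x 1), sq_nonneg (x 0 - x 1)]
    have h2 : 0 ≤ |m2| * x 0 ^ 2 + |m2| * x 2 ^ 2 + 2 * m2 * (x 0 * x 2) := by
      rcases abs_cases m2 with ⟨h, _⟩ | ⟨h, _⟩ <;> rw [h] <;>
        nlinarith [sq_nonneg (x 0 + x 2), sq_nonneg (x 0 - x 2)]
    have hc : 0 < (σ - 1) * (|m1| + |m2|) * a :=
      mul_pos (mul_pos (by linarith) hnz) ha
    linarith [mul_pos hc hxs, mul_nonneg ha.le h1, mul_nonneg ha.le h2,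
      mul_nonneg (mul_nonneg ha.le (abs_nonneg m1)) (sq_nonneg (x 2)),
      mul_nonneg (mul_nonneg ha.le (abs_nonneg m2)) (sq_nonneg (x 1))]
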